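/- Let H be a graph with maximum degree at most 2 whose connected components are all paths, with component vertex-counts a₁,…,a_p, and let G be a graph with maximum degree at most 2 with component vertex-counts b₁,…,b_r (each component a path or cycle). Then there is an injective graph homomorphism (subgraph embedding) from H into G if and only if there is a function f : {1,…,p} → {1,…,r} such that for every j ∈ {1,…,r}, Σ_{i : f(i)=j} a_i ≤ b_j. -/

import Mathlib

/-- `H`: disjoint union of paths with `a i` vertices, `i : Fin p`. -/
def pathsGraph (p : ℕ) (a : Fin p → ℕ) : SimpleGraph (Σ i : Fin p, Fin (a i)) :=
  SimpleGraph.fromRel (fun x y => x.1 = y.1 ∧ (x.2 : ℕ) + 1 = (y.2 : ℕ))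

/-- `G`: disjoint union of components with `b j` vertices, `j : Fin r`, where
component `j` is a cycle if `cyc j = true` (closing edge from last to first vertex)
and a path otherwise. -/
def pathsCyclesGraph (r : ℕ) (b : Fin r → ℕ) (cyc : Fin r → Bool) :
    SimpleGraph (Σ j : Fin r, Fin (b j)) :=
  SimpleGraph.fromRel (fun x y => x.1 = y.1 ∧
    ((x.2 : ℕ) + 1 = (y.2 : ℕ) ∨
      (cyc x.1 = true ∧ (x.2 : ℕ) + 1 = b x.1 ∧ (y.2 : ℕ) = 0)))

open Finset

lemma pcg_adj_fst {r : ℕ} {b : Fin r → ℕ} {cyc : Fin r → Bool}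
    {x y : Σ j : Fin r, Fin (b j)}
    (h : (pathsCyclesGraph r b cyc).Adj x y) : x.1 = y.1 := by
  rw [pathsCyclesGraph, SimpleGraph.fromRel_adj] at h
  rcases h.2 with ⟨h1, _⟩ | ⟨h1, _⟩
  · exact h1
  · exact h1.symm

/-- Theorem 4.5 (bin-packing correspondence): a disjoint union of paths `H`
embeds into a disjoint union of paths and cycles `G` iff the path sizes can be
assigned to components without exceeding the component sizes. -/
theorem stmt4 (p r : ℕ) (a : Fin p → ℕ) (b : Fin r → ℕ) (cyc : Fin r → Bool)
    (ha : ∀ i, 1 ≤ a i) (hb : ∀ j, 1 ≤ b j)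
    (hcyc : ∀ j, cyc j = true → 3 ≤ b j) :
    (∃ η : (Σ i : Fin p, Fin (a i)) → (Σ j : Fin r, Fin (b j)),
      Function.Injective η ∧
      ∀ x y, (pathsGraph p a).Adj x y →
        (pathsCyclesGraph r b cyc).Adj (η x) (η y)) ↔
    (∃ f : Fin p → Fin r, ∀ j,
      ∑ i ∈ Finset.univ.filter (fun i => f i = j), a i ≤ b j) := by
  constructor
  · rintro ⟨η, hinj, hhom⟩
    set f : Fin p → Fin r := fun i => (η ⟨i, ⟨0, ha i⟩⟩).1 with hf
    have claim : ∀ (i : Fin p) (k : ℕ) (hk : k < a i), (η ⟨i, ⟨k, hk⟩⟩).1 = f i := by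
      intro i k
      induction k with
      | zero => intro hk; rfl
      | succ k ih =>
        intro hk
        have hk' : k < a i := Nat.lt_of_succ_lt hk
        have hadj : (pathsGraph p a).Adj ⟨i, ⟨k, hk'⟩⟩ ⟨i, ⟨k+1, hk⟩⟩ := by
          rw [pathsGraph, SimpleGraph.fromRel_adj]
          refine ⟨?_, Or.inl ⟨rfl, rfl⟩⟩
          intro h
          have := congrArg (fun z : Σ i : Fin p, Fin (a i) => (z.2 : ℕ)) h
          simp at this
        have := pcg_adj_fst (hhom _ _ hadj)
        rw [← this, ih hk']
    refine ⟨f, fun j => ?_⟩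
    set s : Finset (Σ i : Fin p, Fin (a i)) :=
      Finset.univ.filter (fun x => f x.1 = j) with hs
    set t : Finset (Σ j' : Fin r, Fin (b j')) :=
      Finset.univ.filter (fun y => y.1 = j) with ht
    have hcard : s.card ≤ t.card := by
      apply Finset.card_le_card_of_injOn η
      · rintro ⟨i, k⟩ hx
        simp only [hs, Finset.mem_coe, Finset.mem_filter, Finset.mem_univ, true_and] at hx
        simp only [ht, Finset.mem_coe, Finset.mem_filter, Finset.mem_univ, true_and]
        rw [show (⟨i, k⟩ : Σ i : Fin p, Fin (a i)) = ⟨i, ⟨(k : ℕ), k.2⟩⟩ from rfl,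
          claim i k k.2]
        exact hx
      · exact hinj.injOn
    have hscard : s.card = ∑ i ∈ Finset.univ.filter (fun i => f i = j), a i := by
      have : s = (Finset.univ.filter (fun i => f i = j)).sigma (fun i => Finset.univ) := by
        ext ⟨i, k⟩
        simp [hs, Finset.mem_sigma]
      rw [this, Finset.card_sigma]
      simp
    have htcard : t.card = b j := by
      have : t = ({j} : Finset (Fin r)).sigma (fun _ => Finset.univ) := by
        ext ⟨j', k⟩
        simp [ht, Finset.mem_sigma]
      rw [this, Finset.card_sigma, Finset.sum_singleton]
      simp
    rw [hscard, htcard] at hcard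
    exact hcard
  · rintro ⟨f, hsum⟩
    set off : Fin p → ℕ := fun i =>
      ∑ i' ∈ Finset.univ.filter (fun i' => f i' = f i ∧ i' < i), a i' with hoff
    have hkey : ∀ i : Fin p, off i + a i ≤ ∑ i' ∈ Finset.univ.filter (fun i' => f i' = f i), a i' := by
      intro i
      have hnotmem : i ∉ Finset.univ.filter (fun i' => f i' = f i ∧ i' < i) := by simp
      have : off i + a i = ∑ i' ∈ insert i (Finset.univ.filter (fun i' => f i' = f i ∧ i' < i)), a i' := by
        rw [Finset.sum_insert hnotmem]; ring
      rw [this]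
      apply Finset.sum_le_sum_of_subset
      intro i' hi'
      simp only [Finset.mem_insert, Finset.mem_filter, Finset.mem_univ, true_and] at hi' ⊢
      rcases hi' with h | h
      · exact h ▸ rfl
      · exact h.1
    have hlt : ∀ (i : Fin p) (k : Fin (a i)), off i + (k : ℕ) < b (f i) := fun i k =>
      lt_of_lt_of_le (by have := k.2; omega) (le_trans (hkey i) (hsum (f i)))
    have hmono : ∀ i i' : Fin p, i < i' → f i = f i' → off i + a i ≤ off i' := by
      intro i i' hii' hfi
      have hnotmem : i ∉ Finset.univ.filter (fun i'' => f i'' = f i ∧ i'' < i) := by simp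
      have heq : off i + a i = ∑ i'' ∈ insert i (Finset.univ.filter (fun i'' => f i'' = f i ∧ i'' < i)), a i'' := by
        rw [Finset.sum_insert hnotmem]; ring
      rw [heq, hoff]
      apply Finset.sum_le_sum_of_subset
      intro i'' hi''
      simp only [Finset.mem_insert, Finset.mem_filter, Finset.mem_univ, true_and] at hi'' ⊢
      rcases hi'' with h | h
      · subst h; exact ⟨hfi, hii'⟩
      · exact ⟨h.1.trans hfi, h.2.trans hii'⟩
    refine ⟨fun x => ⟨f x.1, ⟨off x.1 + (x.2 : ℕ), hlt x.1 x.2⟩⟩, ?_, ?_⟩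
    · rintro ⟨i, k⟩ ⟨i', k'⟩ h
      have hfst : f i = f i' := congrArg Sigma.fst h
      have hsnd : off i + (k : ℕ) = off i' + (k' : ℕ) :=
        congrArg (fun z : Σ j : Fin r, Fin (b j) => (z.2 : ℕ)) h
      rcases lt_trichotomy i i' with hlt' | heq | hlt'
      · have := hmono i i' hlt' hfst
        have := k.2; have := k'.2; omega
      · subst heq
        have : (k : ℕ) = (k' : ℕ) := by omega
        rw [Fin.val_eq_val] at this
        rw [this]
      · have := hmono i' i hlt' hfst.symm
        have := k.2; have := k'.2; omega
    · rintro ⟨i, k⟩ ⟨i', k'⟩ hadj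
      rw [pathsGraph, SimpleGraph.fromRel_adj] at hadj
      rw [pathsCyclesGraph, SimpleGraph.fromRel_adj]
      obtain ⟨hne, hrel⟩ := hadj
      rcases hrel with ⟨h1, h2⟩ | ⟨h1, h2⟩
      · simp only at h1 h2
        subst h1
        constructor
        · intro hh
          have := congrArg (fun z : Σ j : Fin r, Fin (b j) => (z.2 : ℕ)) hh
          simp only at this
          omega
        · left
          exact ⟨rfl, Or.inl (by simp only; omega)⟩
      · simp only at h1 h2
        subst h1
        constructor
        · intro hh
          have := congrArg (fun z : Σ j : Fin r, Fin (b j) => (z.2 : ℕ)) hh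
          simp only at this
          omega
        · right
          exact ⟨rfl, Or.inl (by simp only; omega)⟩
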